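/- arXiv:2207.11835 — 9 statements merged into one kernel-verified Lean document; each statement's English description precedes it below -/
import Mathlib

section
/- Let R, R' > 0 be the reserves of a feeless Uniswap pool, let Δ > 0 be a user trade and η ∈ [0,1) a slippage limit, and let G(x) = R'x/(R+x) be the forward exchange function. Then s* = ( −(Δ+2R) + √((Δ+2R)² + 4(R²+RΔ)·η/(1−η)) )/2 is nonnegative and satisfies the optimal sandwich equation G(Δ+s*) − G(s*) = (1−η)·G(Δ); moreover s* is the unique nonnegative real solution of this equation. -/
/-- For a feeless Uniswap pool with reserves `R, R' > 0`, forward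
exchange function `G x = R' * x / (R + x)`, user trade `Δ > 0` and slippage
`η ∈ [0,1)`, the closed-form `s*` is nonnegative, satisfies the optimal
sandwich equation `G (Δ + s*) - G s* = (1 - η) * G Δ`, and is the unique
nonnegative solution of this equation. -/
theorem uniswap_optimal_sandwich_closed_form
    (R R' Δ η : ℝ) (hR : 0 < R) (hR' : 0 < R') (hΔ : 0 < Δ)
    (hη0 : 0 ≤ η) (hη1 : η < 1)
    (G : ℝ → ℝ) (hG : ∀ x, G x = R' * x / (R + x))
    (sstar : ℝ)
    (hs : sstar =
      (-(Δ + 2 * R) +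
        Real.sqrt ((Δ + 2 * R) ^ 2 + 4 * (R ^ 2 + R * Δ) * (η / (1 - η)))) / 2) :
    0 ≤ sstar ∧
    G (Δ + sstar) - G sstar = (1 - η) * G Δ ∧
    ∀ s : ℝ, 0 ≤ s → G (Δ + s) - G s = (1 - η) * G Δ → s = sstar := by
  have h1 : 0 < 1 - η := by linarith
  set c : ℝ := η / (1 - η) with hc
  have hc0 : 0 ≤ c := div_nonneg hη0 h1.le
  set D : ℝ := (Δ + 2 * R) ^ 2 + 4 * (R ^ 2 + R * Δ) * c with hD
  have hD0 : 0 ≤ D := by positivity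
  have hsq : Real.sqrt D ^ 2 = D := Real.sq_sqrt hD0
  have hsqrt_ge : Δ + 2 * R ≤ Real.sqrt D := by
    have := Real.sqrt_le_sqrt (show (Δ + 2*R)^2 ≤ D by
      have : (0:ℝ) ≤ 4 * (R ^ 2 + R * Δ) * c := by positivity
      nlinarith [this])
    rwa [Real.sqrt_sq (by linarith)] at this
  have hs0 : 0 ≤ sstar := by rw [hs]; linarith
  -- key quadratic identity for sstar
  have key : sstar ^ 2 + (Δ + 2 * R) * sstar = (R ^ 2 + R * Δ) * c := by
    rw [hs]; nlinarith [hsq]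
  have hηc : η = c * (1 - η) - c * (1 - η) * η + η * η := by
    have : c * (1 - η) = η := div_mul_cancel₀ η h1.ne'
    nlinarith [this]
  -- equivalence
  have equiv : ∀ s : ℝ, 0 ≤ s →
      (G (Δ + s) - G s = (1 - η) * G Δ ↔ s ^ 2 + (Δ + 2 * R) * s = (R ^ 2 + R * Δ) * c) := by
    intro s hs'
    have d1 : (0:ℝ) < R + (Δ + s) := by linarith
    have d2 : (0:ℝ) < R + s := by linarith
    have d3 : (0:ℝ) < R + Δ := by linarith
    rw [hG, hG, hG]
    rw [div_sub_div _ _ d1.ne' d2.ne', div_eq_iff (by positivity),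
      show (1 - η) * (R' * Δ / (R + Δ)) * ((R + (Δ + s)) * (R + s))
        = (1 - η) * R' * Δ * ((R + (Δ + s)) * (R + s)) / (R + Δ) by ring,
      eq_div_iff d3.ne']
    constructor
    · intro h
      have h2 : R * (R + Δ) = (1 - η) * ((R + (Δ + s)) * (R + s)) := by
        have hne : (R' * Δ) ≠ 0 := by positivity
        apply mul_left_cancel₀ hne
        linear_combination h
      rw [hc, mul_div_assoc', eq_div_iff h1.ne']
      linear_combination -h2
    · intro h
      have hcmul : c * (1 - η) = η := div_mul_cancel₀ η h1.ne'
      have hq : (s ^ 2 + (Δ + 2 * R) * s) * (1 - η) = (R ^ 2 + R * Δ) * η := by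
        linear_combination (1 - η) * h + (R ^ 2 + R * Δ) * hcmul
      linear_combination (-(R' * Δ)) * hq
  refine ⟨hs0, (equiv sstar hs0).2 key, ?_⟩
  intro s hsge hseq
  have hq := (equiv s hsge).1 hseq
  have hz : (s - sstar) * (s + sstar + (Δ + 2 * R)) = 0 := by
    linear_combination hq - key
  rcases mul_eq_zero.1 hz with h | h
  · linarith
  · exfalso; linarith
end

section
/- Let R, R' > 0 be the reserves of a feeless Uniswap pool with forward exchange function G(x) = R'x/(R+x), let Δ > 0 be a user trade and η ∈ [0,1) a slippage limit. Then the sandwich attacker's profit PNL(Δ,η) = Δ − G⁻¹( (1−η)·G(Δ) ), measured in input tokens, equals η·Δ·(R+Δ) / (R + ηΔ). In particular PNL(Δ,0) = 0 and PNL is independent of the output reserve R'. -/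
lemma uniswap_key (R R' Δ η : ℝ) (hR : 0 < R) (hR' : 0 < R') (hΔ : 0 < Δ)
    (hη0 : 0 ≤ η) (hη1 : η < 1) :
    Δ - R * ((1 - η) * (R' * Δ / (R + Δ))) / (R' - (1 - η) * (R' * Δ / (R + Δ)))
      = η * Δ * (R + Δ) / (R + η * Δ) := by
  have h1 : R + Δ ≠ 0 := by positivity
  have h2 : R + η * Δ ≠ 0 := by positivity
  have hd : R' - (1 - η) * (R' * Δ / (R + Δ)) = R' * (R + η * Δ) / (R + Δ) := by
    field_simp
    ring
  rw [hd]
  have hR'ne : R' ≠ 0 := ne_of_gt hR'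
  field_simp
  ring

/-- For a feeless Uniswap pool with reserves `R, R' > 0`,
forward exchange function `G x = R' x/(R+x)` with inverse
`Ginv y = R y/(R' - y)`, a user trade `Δ > 0` and slippage `η ∈ [0,1)`,
the sandwich attacker's profit `PNL(Δ,η) = Δ - Ginv ((1-η) * G Δ)` equals
`η·Δ·(R+Δ)/(R+ηΔ)`; in particular the profit vanishes at `η = 0` and is
independent of the output reserve `R'` (for any other output reserve
`R'' > 0` the profit is the same). -/
theorem uniswap_sandwich_profit_closed_form
    (R R' Δ η : ℝ) (hR : 0 < R) (hR' : 0 < R') (hΔ : 0 < Δ)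
    (hη0 : 0 ≤ η) (hη1 : η < 1)
    (G Ginv : ℝ → ℝ)
    (hG : ∀ x, G x = R' * x / (R + x))
    (hGinv : ∀ y, Ginv y = R * y / (R' - y)) :
    Δ - Ginv ((1 - η) * G Δ) = η * Δ * (R + Δ) / (R + η * Δ) ∧
    Δ - Ginv ((1 - 0) * G Δ) = 0 ∧
    (∀ R'' : ℝ, 0 < R'' →
      ∀ G₂ Ginv₂ : ℝ → ℝ,
        (∀ x, G₂ x = R'' * x / (R + x)) →
        (∀ y, Ginv₂ y = R * y / (R'' - y)) →
        Δ - Ginv₂ ((1 - η) * G₂ Δ) = Δ - Ginv ((1 - η) * G Δ)) := by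
  have main : Δ - Ginv ((1 - η) * G Δ) = η * Δ * (R + Δ) / (R + η * Δ) := by
    rw [hG, hGinv]
    exact uniswap_key R R' Δ η hR hR' hΔ hη0 hη1
  refine ⟨main, ?_, ?_⟩
  · rw [hG, hGinv]
    have := uniswap_key R R' Δ 0 hR hR' hΔ le_rfl one_pos
    simpa using this
  · intro R'' hR'' G₂ Ginv₂ hG₂ hGinv₂
    rw [hG₂, hGinv₂, main]
    exact uniswap_key R R'' Δ η hR hR'' hΔ hη0 hη1
end

section
/- Let 0 < κ < μ, M > 0, and let G : ℝ → ℝ satisfy G(0) = 0 and κt ≤ G(t) ≤ μt for all t ∈ [0,M]. Let Δ ∈ (0,M], η ∈ [0,1], and s ≥ 0 with Δ + s ≤ M satisfy the sandwich equation G(Δ+s) − G(s) = (1−η)·G(Δ). Then the sandwich size satisfies (μ−κ)·s ≥ (ημ − (μ−κ))·Δ, i.e. s ≥ ( ημ/(μ−κ) − 1 )·Δ; in particular the bound is linear in the slippage η and is nonnegative whenever η ≥ 1 − κ/μ. -/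
/-- If `G` is `(μ,κ)`-smooth on `[0,M]` (with `0 < κ < μ`,
`G 0 = 0`, `κ t ≤ G t ≤ μ t` on `[0,M]`), `Δ ∈ (0,M]`, `η ∈ [0,1]`, and
`s ≥ 0` with `Δ + s ≤ M` satisfies the sandwich equation
`G (Δ+s) - G s = (1-η) G Δ`, then `(μ-κ) s ≥ (ημ - (μ-κ)) Δ`, i.e.
`s ≥ (ημ/(μ-κ) - 1) Δ`; in particular this lower bound is nonnegative
whenever `η ≥ 1 - κ/μ`. -/
theorem sandwich_size_lower_bound_smooth
    (κ μ M Δ η s : ℝ) (G : ℝ → ℝ)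
    (hκ : 0 < κ) (hκμ : κ < μ) (hM : 0 < M)
    (hG0 : G 0 = 0)
    (hGlb : ∀ t ∈ Set.Icc (0 : ℝ) M, κ * t ≤ G t)
    (hGub : ∀ t ∈ Set.Icc (0 : ℝ) M, G t ≤ μ * t)
    (hΔ0 : 0 < Δ) (hΔM : Δ ≤ M)
    (hη0 : 0 ≤ η) (hη1 : η ≤ 1)
    (hs0 : 0 ≤ s) (hsM : Δ + s ≤ M)
    (hsand : G (Δ + s) - G s = (1 - η) * G Δ) :
    (μ - κ) * s ≥ (η * μ - (μ - κ)) * Δ ∧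
    s ≥ (η * μ / (μ - κ) - 1) * Δ ∧
    (η ≥ 1 - κ / μ → 0 ≤ (η * μ / (μ - κ) - 1) * Δ) := by
  have hμκ : (0:ℝ) < μ - κ := by linarith
  have h1 : κ * (Δ + s) ≤ G (Δ + s) :=
    hGlb _ ⟨by linarith, hsM⟩
  have h2 : G s ≤ μ * s := hGub _ ⟨hs0, by linarith⟩
  have h3 : G Δ ≤ μ * Δ := hGub _ ⟨le_of_lt hΔ0, hΔM⟩
  have h4 : (1 - η) * G Δ ≤ (1 - η) * (μ * Δ) := by
    apply mul_le_mul_of_nonneg_left h3 (by linarith)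
  have key : (μ - κ) * s ≥ (η * μ - (μ - κ)) * Δ := by nlinarith
  refine ⟨key, ?_, ?_⟩
  · rw [ge_iff_le, sub_mul, div_mul_eq_mul_div, div_sub' (ne_of_gt hμκ),
      div_le_iff₀ hμκ]
    ring_nf
    nlinarith
  · intro hη
    have : η * μ ≥ μ - κ := by
      have hμ : (0:ℝ) < μ := lt_trans hκ hκμ
      have heq : (μ - κ)/μ = 1 - κ/μ := by field_simp
      have := (div_le_iff₀ hμ).mp (by linarith [heq] : (μ - κ)/μ ≤ η)
      linarith [this]
    have : 1 ≤ η * μ / (μ - κ) := (le_div_iff₀ hμκ).mpr (by linarith)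
    nlinarith
end

section
/- Let β > 0, g₀ ≥ 0, μ > 0, K > 0, and let G : ℝ → ℝ satisfy G(0) = 0, G(t) ≥ (β/2)t² + g₀·t for all t ∈ [0,K] (β-liquidity of the forward exchange rate), and G(t) ≤ μt for all t ∈ [0,K]. Let Δ ∈ (0,K], η ∈ [0,1], and s ≥ 0 with Δ + s ≤ K satisfy G(Δ+s) − G(s) = (1−η)·G(Δ). Then s satisfies the quadratic constraint (β/2)·s² + (βΔ + g₀ − μ)·s + ( (β/2)Δ² + g₀Δ − (1−η)μΔ ) ≤ 0; consequently s is at most the larger root of the corresponding quadratic, so β-liquidity bounds the size of any sandwich attack. -/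
/-- If `G 0 = 0`, `G t ≥ (β/2)t² + g₀ t` on `[0,K]`
(β-liquidity of the forward exchange rate) and `G t ≤ μ t` on `[0,K]`,
`Δ ∈ (0,K]`, `η ∈ [0,1]`, and `s ≥ 0` with `Δ + s ≤ K` satisfies the
sandwich equation `G (Δ+s) - G s = (1-η) G Δ`, then `s` satisfies the
quadratic constraint
`(β/2) s² + (βΔ + g₀ - μ) s + ((β/2)Δ² + g₀Δ - (1-η)μΔ) ≤ 0`;
consequently `s` is at most the larger root of the corresponding quadratic. -/
theorem sandwich_size_quadratic_bound_liquid
    (β g₀ μ K Δ η s : ℝ) (G : ℝ → ℝ)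
    (hβ : 0 < β) (hg₀ : 0 ≤ g₀) (hμ : 0 < μ) (hK : 0 < K)
    (hG0 : G 0 = 0)
    (hGlb : ∀ t ∈ Set.Icc (0 : ℝ) K, (β / 2) * t ^ 2 + g₀ * t ≤ G t)
    (hGub : ∀ t ∈ Set.Icc (0 : ℝ) K, G t ≤ μ * t)
    (hΔ0 : 0 < Δ) (hΔK : Δ ≤ K)
    (hη0 : 0 ≤ η) (hη1 : η ≤ 1)
    (hs0 : 0 ≤ s) (hsK : Δ + s ≤ K)
    (hsand : G (Δ + s) - G s = (1 - η) * G Δ) :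
    (β / 2) * s ^ 2 + (β * Δ + g₀ - μ) * s +
      ((β / 2) * Δ ^ 2 + g₀ * Δ - (1 - η) * μ * Δ) ≤ 0 ∧
    s ≤ (-(β * Δ + g₀ - μ) +
          Real.sqrt ((β * Δ + g₀ - μ) ^ 2 -
            4 * (β / 2) * ((β / 2) * Δ ^ 2 + g₀ * Δ - (1 - η) * μ * Δ))) /
        (2 * (β / 2)) := by
  set a := β / 2 with ha
  set b := β * Δ + g₀ - μ with hb
  set c := a * Δ ^ 2 + g₀ * Δ - (1 - η) * μ * Δ with hc
  have ha0 : 0 < a := by positivity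
  have hηnn : 0 ≤ 1 - η := by linarith
  -- bounds
  have h1 : a * (Δ + s) ^ 2 + g₀ * (Δ + s) ≤ G (Δ + s) :=
    hGlb _ ⟨by linarith, hsK⟩
  have h2 : G s ≤ μ * s := hGub _ ⟨hs0, by linarith⟩
  have h3 : G Δ ≤ μ * Δ := hGub _ ⟨le_of_lt hΔ0, hΔK⟩
  have h4 : (1 - η) * G Δ ≤ (1 - η) * (μ * Δ) :=
    mul_le_mul_of_nonneg_left h3 hηnn
  have hquad : a * s ^ 2 + b * s + c ≤ 0 := by
    have := hsand
    nlinarith [h1, h2, h4]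
  refine ⟨hquad, ?_⟩
  have hdisc : (2 * a * s + b) ^ 2 ≤ b ^ 2 - 4 * a * c := by
    nlinarith [hquad, ha0]
  have hsq : 2 * a * s + b ≤ Real.sqrt (b ^ 2 - 4 * a * c) := by
    calc 2 * a * s + b ≤ |2 * a * s + b| := le_abs_self _
      _ = Real.sqrt ((2 * a * s + b) ^ 2) := (Real.sqrt_sq_eq_abs _).symm
      _ ≤ Real.sqrt (b ^ 2 - 4 * a * c) := Real.sqrt_le_sqrt hdisc
  rw [le_div_iff₀ (by linarith : (0:ℝ) < 2 * a)]
  linarith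
end

section
/- Let 0 < κ ≤ μ, M > 0, and let G : ℝ → ℝ satisfy G(0) = 0 and κt ≤ G(t) ≤ μt for all t ∈ [0,M]. Let Δ ∈ (0,M], η ∈ [0,1], and let w ∈ [0,M] satisfy G(w) = (1−η)·G(Δ). Then the sandwich profit PNL = Δ − w satisfies the upper bound PNL ≤ ( (μ−κ) + ηκ )·Δ/μ. In particular, when κ = μ the profit is at most ηΔ, linear in the slippage limit. -/
/-- If `G` is `(μ,κ)`-smooth on `[0,M]` (`0 < κ ≤ μ`, `G 0 = 0`,
`κ t ≤ G t ≤ μ t` on `[0,M]`), `Δ ∈ (0,M]`, `η ∈ [0,1]`, and `w ∈ [0,M]`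
satisfies `G w = (1-η) G Δ`, then the sandwich profit `PNL = Δ - w` satisfies
`PNL ≤ ((μ-κ) + ηκ) Δ / μ`; in particular when `κ = μ` the profit is at
most `η Δ`. -/
theorem sandwich_profit_upper_bound_smooth
    (κ μ M Δ η w : ℝ) (G : ℝ → ℝ)
    (hκ : 0 < κ) (hκμ : κ ≤ μ) (hM : 0 < M)
    (hG0 : G 0 = 0)
    (hGlb : ∀ t ∈ Set.Icc (0 : ℝ) M, κ * t ≤ G t)
    (hGub : ∀ t ∈ Set.Icc (0 : ℝ) M, G t ≤ μ * t)
    (hΔ0 : 0 < Δ) (hΔM : Δ ≤ M)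
    (hη0 : 0 ≤ η) (hη1 : η ≤ 1)
    (hw : w ∈ Set.Icc (0 : ℝ) M)
    (hGw : G w = (1 - η) * G Δ) :
    Δ - w ≤ ((μ - κ) + η * κ) * Δ / μ ∧
    (κ = μ → Δ - w ≤ η * Δ) := by
  have hμ : 0 < μ := lt_of_lt_of_le hκ hκμ
  have h1 : G w ≤ μ * w := hGub w hw
  have h2 : κ * Δ ≤ G Δ := hGlb Δ ⟨le_of_lt hΔ0, hΔM⟩
  have h3 : (1 - η) * (κ * Δ) ≤ (1 - η) * G Δ :=
    mul_le_mul_of_nonneg_left h2 (by linarith)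
  have h4 : (1 - η) * (κ * Δ) ≤ μ * w := by rw [← hGw] at h3; linarith
  have main : Δ - w ≤ ((μ - κ) + η * κ) * Δ / μ := by
    rw [sub_le_iff_le_add, div_add' _ _ _ (ne_of_gt hμ), le_div_iff₀ hμ]
    nlinarith
  refine ⟨main, fun h => ?_⟩
  subst h
  have heq : (κ - κ + η * κ) * Δ / κ = η * Δ := by field_simp; ring
  linarith [heq ▸ main]
end

section
/- Let 0 < κ ≤ μ, M > 0, and let G : ℝ → ℝ satisfy G(0) = 0 and κt ≤ G(t) ≤ μt for all t ∈ [0,M]. Let Δ ∈ (0,M], η ∈ [0,1], and let w ∈ [0,M] satisfy G(w) = (1−η)·G(Δ). Then the sandwich profit PNL = Δ − w satisfies the lower bound PNL ≥ ( κ − (1−η)μ )·Δ/κ. -/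
/-- If `G` is `(μ,κ)`-smooth on `[0,M]` (`0 < κ ≤ μ`, `G 0 = 0`,
`κ t ≤ G t ≤ μ t` on `[0,M]`), `Δ ∈ (0,M]`, `η ∈ [0,1]`, and `w ∈ [0,M]`
satisfies `G w = (1-η) G Δ`, then the sandwich profit `PNL = Δ - w` satisfies
the lower bound `PNL ≥ (κ - (1-η)μ) Δ / κ`. -/
theorem sandwich_profit_lower_bound_smooth
    (κ μ M Δ η w : ℝ) (G : ℝ → ℝ)
    (hκ : 0 < κ) (hκμ : κ ≤ μ) (hM : 0 < M)
    (hG0 : G 0 = 0)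
    (hGlb : ∀ t ∈ Set.Icc (0 : ℝ) M, κ * t ≤ G t)
    (hGub : ∀ t ∈ Set.Icc (0 : ℝ) M, G t ≤ μ * t)
    (hΔ0 : 0 < Δ) (hΔM : Δ ≤ M)
    (hη0 : 0 ≤ η) (hη1 : η ≤ 1)
    (hw : w ∈ Set.Icc (0 : ℝ) M)
    (hGw : G w = (1 - η) * G Δ) :
    Δ - w ≥ (κ - (1 - η) * μ) * Δ / κ := by
  have h1 : κ * w ≤ G w := hGlb w hw
  have h2 : G Δ ≤ μ * Δ := hGub Δ ⟨le_of_lt hΔ0, hΔM⟩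
  have h3 : (1 - η) * G Δ ≤ (1 - η) * (μ * Δ) :=
    mul_le_mul_of_nonneg_left h2 (by linarith)
  have hκw : κ * w ≤ (1 - η) * μ * Δ := by rw [hGw] at h1; nlinarith
  rw [ge_iff_le, div_le_iff₀ hκ]
  nlinarith
end

section
/- Let 0 < κ < μ, M > 0, and let G : ℝ → ℝ satisfy G(0) = 0 and κt ≤ G(t) ≤ μt for all t ∈ [0,M]. Let Δ ∈ (0,M], η ∈ [0,1], let s ≥ 0 with Δ + s ≤ M satisfy G(Δ+s) − G(s) = (1−η)·G(Δ), let w ∈ [0,M] satisfy G(w) = (1−η)·G(Δ), and set Δsand' = s + Δ − w (the attacker's back-run trade in input-token units). Then Δsand' ≥ ( (ημ − (μ−κ))/(μ−κ) + (κ − (1−η)μ)/κ )·Δ. -/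
/-- If `G` is `(μ,κ)`-smooth on `[0,M]` (`0 < κ < μ`,
`G 0 = 0`, `κ t ≤ G t ≤ μ t` on `[0,M]`), `Δ ∈ (0,M]`, `η ∈ [0,1]`,
the front-run `s ≥ 0` (with `Δ + s ≤ M`) satisfies
`G (Δ+s) - G s = (1-η) G Δ`, and `w ∈ [0,M]` satisfies `G w = (1-η) G Δ`,
then the attacker's back-run `Δsand' = s + Δ - w` satisfies
`Δsand' ≥ ((ημ - (μ-κ))/(μ-κ) + (κ - (1-η)μ)/κ) Δ`. -/
theorem back_run_trade_lower_bound
    (κ μ M Δ η s w : ℝ) (G : ℝ → ℝ)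
    (hκ : 0 < κ) (hκμ : κ < μ) (hM : 0 < M)
    (hG0 : G 0 = 0)
    (hGlb : ∀ t ∈ Set.Icc (0 : ℝ) M, κ * t ≤ G t)
    (hGub : ∀ t ∈ Set.Icc (0 : ℝ) M, G t ≤ μ * t)
    (hΔ0 : 0 < Δ) (hΔM : Δ ≤ M)
    (hη0 : 0 ≤ η) (hη1 : η ≤ 1)
    (hs0 : 0 ≤ s) (hsM : Δ + s ≤ M)
    (hsand : G (Δ + s) - G s = (1 - η) * G Δ)
    (hw : w ∈ Set.Icc (0 : ℝ) M)
    (hGw : G w = (1 - η) * G Δ) :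
    s + Δ - w ≥ ((η * μ - (μ - κ)) / (μ - κ) + (κ - (1 - η) * μ) / κ) * Δ := by
  obtain ⟨hw0, hwM⟩ := hw
  have hμκ : (0:ℝ) < μ - κ := by linarith
  have h1 : κ * (Δ + s) ≤ G (Δ + s) :=
    hGlb _ ⟨by linarith, hsM⟩
  have h2 : G s ≤ μ * s := hGub _ ⟨hs0, by linarith⟩
  have h3 : G Δ ≤ μ * Δ := hGub _ ⟨le_of_lt hΔ0, hΔM⟩
  have h4 : κ * w ≤ G w := hGlb _ ⟨hw0, hwM⟩
  have h5 : 0 ≤ G Δ := le_trans (by nlinarith [hGlb Δ ⟨le_of_lt hΔ0, hΔM⟩]) (hGlb Δ ⟨le_of_lt hΔ0, hΔM⟩)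
  -- s bound: (ημ - (μ-κ)) * Δ ≤ s * (μ - κ)
  have hsb : (η * μ - (μ - κ)) * Δ ≤ s * (μ - κ) := by nlinarith
  -- w bound: (κ - (1-η)μ) * Δ ≤ (Δ - w) * κ
  have hwb : (κ - (1 - η) * μ) * Δ ≤ (Δ - w) * κ := by nlinarith
  have e1 : (η * μ - (μ - κ)) / (μ - κ) * Δ ≤ s := by
    rw [div_mul_eq_mul_div, div_le_iff₀ hμκ]; linarith
  have e2 : (κ - (1 - η) * μ) / κ * Δ ≤ Δ - w := by
    rw [div_mul_eq_mul_div, div_le_iff₀ hκ]; linarith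
  have := add_le_add e1 e2
  linarith [this]
end

section
/- Let 0 < κ < μ, M > 0, and let G : ℝ → ℝ satisfy G(0) = 0 and κt ≤ G(t) ≤ μt for all t ∈ [0,M]. Let Δ ∈ (0,M], η ∈ [0,1], let u ∈ ℝ be a partial trade drift, and let s satisfy s + u ≥ 0, Δ + s + u ≤ M, and the drift-adjusted sandwich equation G(Δ + s + u) − G(s + u) = (1−η)·G(Δ). Then s + u ≥ ( (ημ − (μ−κ))/(μ−κ) )·Δ, i.e. s ≥ ( ημ/(μ−κ) − 1 )·Δ − u. -/
/-- If `G` is `(μ,κ)`-smooth on `[0,M]` (`0 < κ < μ`,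
`G 0 = 0`, `κ t ≤ G t ≤ μ t` on `[0,M]`), `Δ ∈ (0,M]`, `η ∈ [0,1]`,
`u` is a partial trade drift, and `s` satisfies `s + u ≥ 0`,
`Δ + s + u ≤ M` and the drift-adjusted sandwich equation
`G (Δ + s + u) - G (s + u) = (1-η) G Δ`, then
`s + u ≥ ((ημ - (μ-κ))/(μ-κ)) Δ`, i.e. `s ≥ (ημ/(μ-κ) - 1) Δ - u`. -/
theorem sandwich_size_lower_bound_with_drift
    (κ μ M Δ η u s : ℝ) (G : ℝ → ℝ)
    (hκ : 0 < κ) (hκμ : κ < μ) (hM : 0 < M)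
    (hG0 : G 0 = 0)
    (hGlb : ∀ t ∈ Set.Icc (0 : ℝ) M, κ * t ≤ G t)
    (hGub : ∀ t ∈ Set.Icc (0 : ℝ) M, G t ≤ μ * t)
    (hΔ0 : 0 < Δ) (hΔM : Δ ≤ M)
    (hη0 : 0 ≤ η) (hη1 : η ≤ 1)
    (hsu0 : 0 ≤ s + u) (hsuM : Δ + s + u ≤ M)
    (hsand : G (Δ + s + u) - G (s + u) = (1 - η) * G Δ) :
    s + u ≥ ((η * μ - (μ - κ)) / (μ - κ)) * Δ ∧
    s ≥ (η * μ / (μ - κ) - 1) * Δ - u := by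
  have hx0 : (0:ℝ) ≤ s + u := hsu0
  have h1 : κ * (Δ + (s + u)) ≤ G (Δ + (s + u)) := hGlb _ ⟨by linarith, by linarith⟩
  have h2 : G (s + u) ≤ μ * (s + u) := hGub _ ⟨hx0, by linarith⟩
  have h3 : G Δ ≤ μ * Δ := hGub _ ⟨le_of_lt hΔ0, hΔM⟩
  have hΔ' : Δ + s + u = Δ + (s + u) := by ring
  rw [hΔ'] at hsand
  have hd : 0 < μ - κ := by linarith
  have key : (η * μ - (μ - κ)) * Δ ≤ (s + u) * (μ - κ) := by nlinarith
  constructor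
  · rw [ge_iff_le, div_mul_eq_mul_div, div_le_iff₀ hd]
    linarith
  · have : (η * μ / (μ - κ) - 1) * Δ - u = (η * μ - (μ - κ)) * Δ / (μ - κ) - u := by
      field_simp
    rw [ge_iff_le, this, sub_le_iff_le_add, div_le_iff₀ hd]
    nlinarith
end

section
/- (Reverse discrete Grönwall inequality.) Let (u_k) be a real sequence and (q_k), (f_k) nonnegative real sequences. Suppose that for all naturals k ≤ r, u_r ≥ u_k − q_r · Σ_{ℓ=k+1}^{r} f_ℓ u_ℓ. Then for all naturals k ≤ r, u_r ≥ u_k · ∏_{ℓ=k+1}^{r} (1 + q_r f_ℓ)^{−1}. -/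
lemma gronwall_tele (c : ℝ) (f : ℕ → ℝ) :
    ∀ r k : ℕ, k ≤ r →
      c * ∑ ℓ ∈ Finset.Ioc k r, f ℓ * ∏ m ∈ Finset.Ioc ℓ r, (1 + c * f m)
        = (∏ ℓ ∈ Finset.Ioc k r, (1 + c * f ℓ)) - 1 := by
  intro r
  induction r with
  | zero => intro k hk; interval_cases k; simp
  | succ r ih =>
      intro k hk
      rcases Nat.lt_or_ge k (r+1) with h | h
      · have hk' : k ≤ r := Nat.lt_succ_iff.mp h
        rw [Finset.sum_Ioc_succ_top hk', Finset.prod_Ioc_succ_top hk']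
        have hsum : ∑ ℓ ∈ Finset.Ioc k r, f ℓ * ∏ m ∈ Finset.Ioc ℓ (r+1), (1 + c * f m)
            = (1 + c * f (r+1)) * ∑ ℓ ∈ Finset.Ioc k r, f ℓ * ∏ m ∈ Finset.Ioc ℓ r, (1 + c * f m) := by
          rw [Finset.mul_sum]
          refine Finset.sum_congr rfl ?_
          intro ℓ hℓ
          have hℓr : ℓ ≤ r := (Finset.mem_Ioc.mp hℓ).2
          rw [Finset.prod_Ioc_succ_top hℓr]
          ring
        rw [hsum]
        simp only [Finset.Ioc_self, Finset.prod_empty]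
        linear_combination (1 + c * f (r+1)) * ih k hk'
      · have : k = r + 1 := le_antisymm hk h
        subst this; simp

/-- Reverse discrete Grönwall inequality: If `(u k)` is a
real sequence, `(q k)`, `(f k)` are nonnegative sequences, and for all
naturals `k ≤ r` we have `u r ≥ u k - q r * Σ_{ℓ=k+1}^{r} f ℓ * u ℓ`, then
for all naturals `k ≤ r`,
`u r ≥ u k * Π_{ℓ=k+1}^{r} (1 + q r * f ℓ)⁻¹`. -/
theorem reverse_discrete_gronwall
    (u q f : ℕ → ℝ)
    (hq : ∀ k, 0 ≤ q k) (hf : ∀ k, 0 ≤ f k)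
    (hrec : ∀ k r : ℕ, k ≤ r →
      u r ≥ u k - q r * ∑ ℓ ∈ Finset.Ioc k r, f ℓ * u ℓ) :
    ∀ k r : ℕ, k ≤ r →
      u r ≥ u k * ∏ ℓ ∈ Finset.Ioc k r, (1 + q r * f ℓ)⁻¹ := by
  intro k r hkr
  have hpos : ∀ s : Finset ℕ, (0:ℝ) < ∏ ℓ ∈ s, (1 + q r * f ℓ) := by
    intro s
    apply Finset.prod_pos
    intro i _
    nlinarith [hq r, hf i, mul_nonneg (hq r) (hf i)]
  -- main claim by strong downward induction on r - k
  have main : ∀ n : ℕ, ∀ j : ℕ, j ≤ r → r - j ≤ n →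
      u j ≤ u r * ∏ ℓ ∈ Finset.Ioc j r, (1 + q r * f ℓ) := by
    intro n
    induction n with
    | zero =>
        intro j hj hd
        have : j = r := le_antisymm hj (Nat.le_of_sub_eq_zero (Nat.le_zero.mp hd))
        subst this; simp
    | succ n ih =>
        intro j hj hd
        rcases eq_or_lt_of_le hj with rfl | hjr
        · simp
        · have h1 : u j ≤ u r + q r * ∑ ℓ ∈ Finset.Ioc j r, f ℓ * u ℓ := by
            have := hrec j r hj; linarith
          have h2 : ∑ ℓ ∈ Finset.Ioc j r, f ℓ * u ℓ
              ≤ ∑ ℓ ∈ Finset.Ioc j r, f ℓ * (u r * ∏ m ∈ Finset.Ioc ℓ r, (1 + q r * f m)) := by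
            refine Finset.sum_le_sum ?_
            intro ℓ hℓ
            have hmem := Finset.mem_Ioc.mp hℓ
            have hih : u ℓ ≤ u r * ∏ m ∈ Finset.Ioc ℓ r, (1 + q r * f m) := by
              apply ih ℓ hmem.2
              omega
            exact mul_le_mul_of_nonneg_left hih (hf ℓ)
          have h3 : u j ≤ u r + q r * ∑ ℓ ∈ Finset.Ioc j r, f ℓ * (u r * ∏ m ∈ Finset.Ioc ℓ r, (1 + q r * f m)) := by
            have := mul_le_mul_of_nonneg_left h2 (hq r)
            linarith
          have h4 : ∑ ℓ ∈ Finset.Ioc j r, f ℓ * (u r * ∏ m ∈ Finset.Ioc ℓ r, (1 + q r * f m))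
              = u r * ∑ ℓ ∈ Finset.Ioc j r, f ℓ * ∏ m ∈ Finset.Ioc ℓ r, (1 + q r * f m) := by
            rw [Finset.mul_sum]; refine Finset.sum_congr rfl ?_; intro ℓ _; ring
          have h5 := gronwall_tele (q r) f r j hj
          calc u j ≤ u r + q r * (u r * ∑ ℓ ∈ Finset.Ioc j r, f ℓ * ∏ m ∈ Finset.Ioc ℓ r, (1 + q r * f m)) := by
                rw [← h4]; exact h3
            _ = u r * (1 + (q r * ∑ ℓ ∈ Finset.Ioc j r, f ℓ * ∏ m ∈ Finset.Ioc ℓ r, (1 + q r * f m))) := by ring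
            _ = u r * ∏ ℓ ∈ Finset.Ioc j r, (1 + q r * f ℓ) := by rw [h5]; ring
  have hmain := main (r - k) k hkr le_rfl
  rw [ge_iff_le, Finset.prod_inv_distrib, ← div_eq_mul_inv]
  exact (div_le_iff₀ (hpos _)).mpr hmain
end
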